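/- Let k ≥ 2 and q be a prime power with q ≡ 1 (mod k) if q even, q ≡ 1 (mod 2k) if q odd. Then the number of triangles (complete subgraphs of order 3) in the generalized Paley graph G_k(q) equals (q(q-1)/(6k³))·(R_k(q) + q - 3k + 1), where R_k(q) := Σ_{s,t=1, s+t ≢ 0 (mod k)}^{k-1} J(χ_k^s, χ_k^t) for χ_k a character of F_q* of order k. -/

import Mathlib

set_option maxHeartbeats 1000000

open Finset

set_option maxHeartbeats 1000000
open Finset

lemma gp_triple_count {F : Type*} [DecidableEq F] [Fintype F] (G : SimpleGraph F)
    [DecidableRel G.Adj] :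
    (Finset.univ.filter fun p : F × F × F =>
        G.Adj p.1 p.2.1 ∧ G.Adj p.2.1 p.2.2 ∧ G.Adj p.1 p.2.2).card
      = 6 * (G.cliqueFinset 3).card := by
  rw [Finset.card_eq_sum_card_fiberwise
      (f := fun p : F × F × F => ({p.1, p.2.1, p.2.2} : Finset F))
      (t := G.cliqueFinset 3) ?memb]
  case memb =>
    rintro ⟨a, b, c⟩ hp
    simp only [Finset.mem_coe, mem_filter] at hp
    obtain ⟨-, h1, h2, h3⟩ := hp
    rw [Finset.mem_coe, SimpleGraph.mem_cliqueFinset_iff, SimpleGraph.is3Clique_triple_iff]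
    exact ⟨h1, h3, h2⟩
  · rw [Finset.sum_congr rfl (g := fun _ => 6) ?fiber, Finset.sum_const, smul_eq_mul,
      mul_comm]
    case fiber =>
      intro s hs
      rw [SimpleGraph.mem_cliqueFinset_iff] at hs
      obtain ⟨x, y, z, hxy, hxz, hyz, rfl⟩ := Finset.card_eq_three.mp hs.2
      obtain ⟨hxyA, hxzA, hyzA⟩ := SimpleGraph.is3Clique_triple_iff.mp hs
      rw [Finset.filter_filter]
      have : (Finset.univ.filter fun p : F × F × F =>
          (G.Adj p.1 p.2.1 ∧ G.Adj p.2.1 p.2.2 ∧ G.Adj p.1 p.2.2) ∧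
            ({p.1, p.2.1, p.2.2} : Finset F) = {x, y, z})
          = ({(x,y,z),(x,z,y),(y,x,z),(y,z,x),(z,x,y),(z,y,x)} : Finset (F×F×F)) := by
        ext ⟨a, b, c⟩
        simp only [mem_filter, mem_univ, true_and, mem_insert, mem_singleton,
          Prod.mk.injEq]
        constructor
        · rintro ⟨⟨h1, h2, h3⟩, hset⟩
          have hab : a ≠ b := h1.ne
          have hbc : b ≠ c := h2.ne
          have hac : a ≠ c := h3.ne
          have ha : a = x ∨ a = y ∨ a = z := by
            have : a ∈ ({x, y, z} : Finset F) := by rw [← hset]; simp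
            simpa using this
          have hb : b = x ∨ b = y ∨ b = z := by
            have : b ∈ ({x, y, z} : Finset F) := by rw [← hset]; simp
            simpa using this
          have hc : c = x ∨ c = y ∨ c = z := by
            have : c ∈ ({x, y, z} : Finset F) := by rw [← hset]; simp
            simpa using this
          rcases ha with rfl | rfl | rfl <;> rcases hb with rfl | rfl | rfl <;>
            rcases hc with rfl | rfl | rfl <;>
            first
              | exact absurd rfl hab | exact absurd rfl hbc | exact absurd rfl hac
              | simp
        · have e1 : ({y, x, z} : Finset F) = {x, y, z} := by
            ext; simp; tauto
          have e2 : ({y, z, x} : Finset F) = {x, y, z} := by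
            ext; simp; tauto
          have e3 : ({z, x, y} : Finset F) = {x, y, z} := by
            ext; simp; tauto
          have e4 : ({z, y, x} : Finset F) = {x, y, z} := by
            ext; simp; tauto
          have e5 : ({x, z, y} : Finset F) = {x, y, z} := by
            ext; simp; tauto
          rintro ((⟨rfl,rfl,rfl⟩)|(⟨rfl,rfl,rfl⟩)|(⟨rfl,rfl,rfl⟩)|(⟨rfl,rfl,rfl⟩)|(⟨rfl,rfl,rfl⟩)|(⟨rfl,rfl,rfl⟩)) <;>
            refine ⟨⟨?_, ?_, ?_⟩, by simp [e1, e2, e3, e4, e5]⟩ <;>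
            first
              | exact hxyA | exact hxzA | exact hyzA
              | exact hxyA.symm | exact hxzA.symm | exact hyzA.symm
      rw [this]
      rw [Finset.card_insert_of_notMem (by simp [Prod.ext_iff, hxy, hxz, hyz, hxy.symm, hxz.symm, hyz.symm]),
        Finset.card_insert_of_notMem (by simp [Prod.ext_iff, hxy, hxz, hyz, hxy.symm, hxz.symm, hyz.symm]),
        Finset.card_insert_of_notMem (by simp [Prod.ext_iff, hxy, hxz, hyz, hxy.symm, hxz.symm, hyz.symm]),
        Finset.card_insert_of_notMem (by simp [Prod.ext_iff, hxy, hxz, hyz, hxy.symm, hxz.symm, hyz.symm]),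
        Finset.card_insert_of_notMem (by simp [Prod.ext_iff, hxy, hxz, hyz, hxy.symm, hxz.symm, hyz.symm]),
        Finset.card_singleton]
open Finset

section Chars

variable {F : Type*} [Field F] [Fintype F] [DecidableEq F] {k : ℕ}

lemma gp_pow_card_sub_one (χ : MulChar F ℂ) : χ ^ (Fintype.card F - 1) = 1 := by
  refine MulChar.ext fun a => ?_
  rw [MulChar.pow_apply_coe, MulChar.one_apply_coe, ← map_pow, ← Units.val_pow_eq_pow_val,
    ← Fintype.card_units (α := F), pow_card_eq_one, Units.val_one, map_one]

lemma gp_dvd (χ : MulChar F ℂ) (hord : orderOf χ = k) : k ∣ Fintype.card F - 1 := by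
  rw [← hord]
  exact orderOf_dvd_of_pow_eq_one (gp_pow_card_sub_one χ)

lemma gp_pow_k (χ : MulChar F ℂ) (hord : orderOf χ = k) : χ ^ k = 1 := by
  rw [← hord]; exact pow_orderOf_eq_one χ

lemma gp_val_one_iff (χ : MulChar F ℂ) (hord : orderOf χ = k) (hk : 2 ≤ k)
    {x : F} (hx : x ≠ 0) :
    χ x = 1 ↔ ∃ c : F, c ≠ 0 ∧ c ^ k = x := by
  constructor
  · intro h1
    obtain ⟨g, hg⟩ := IsCyclic.exists_generator (α := Fˣ)
    have key : ∀ n : ℕ, χ ^ n = 1 ↔ (χ (g : F)) ^ n = 1 := by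
      intro n
      constructor
      · intro h
        rw [← MulChar.pow_apply_coe, h, MulChar.one_apply_coe]
      · intro h
        refine MulChar.ext fun a => ?_
        obtain ⟨m, hm⟩ := (Submonoid.mem_powers_iff a g).mp
          (mem_powers_iff_mem_zpowers.mpr (hg a))
        rw [MulChar.pow_apply_coe, MulChar.one_apply_coe, ← hm]
        rw [Units.val_pow_eq_pow_val, map_pow, ← pow_mul, mul_comm, pow_mul, h, one_pow]
    have hζ : orderOf (χ (g : F)) = k := by
      rw [← hord]
      exact orderOf_eq_orderOf_iff.mpr fun n => (key n).symm
    obtain ⟨m, hm⟩ := (Submonoid.mem_powers_iff (Units.mk0 x hx) g).mp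
      (mem_powers_iff_mem_zpowers.mpr (hg (Units.mk0 x hx)))
    have hxm : χ x = (χ (g : F)) ^ m := by
      have h0 : χ x = χ ((Units.mk0 x hx : Fˣ) : F) := rfl
      rw [h0, ← hm, Units.val_pow_eq_pow_val, map_pow]
    obtain ⟨d, hd⟩ : k ∣ m := by
      rw [← hζ]
      exact orderOf_dvd_of_pow_eq_one (by rw [← hxm, h1])
    refine ⟨((g ^ d : Fˣ) : F), Units.ne_zero _, ?_⟩
    rw [← Units.val_pow_eq_pow_val, ← pow_mul, mul_comm d k, ← hd, hm]
    rfl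
  · rintro ⟨c, hc, rfl⟩
    rw [map_pow]
    calc χ c ^ k = (χ ^ k) c := (MulChar.pow_apply' χ (by omega) c).symm
      _ = 1 := by rw [gp_pow_k χ hord, MulChar.one_apply (Ne.isUnit hc)]

lemma gp_neg_one_pow (hk : 2 ≤ k)
    (heven : Even (Fintype.card F) → Fintype.card F % k = 1)
    (hodd : Odd (Fintype.card F) → Fintype.card F % (2 * k) = 1) :
    ∃ y : F, y ≠ 0 ∧ y ^ k = -1 := by
  rcases Nat.even_or_odd (Fintype.card F) with he | ho
  · have h2 : ringChar F = 2 := (FiniteField.even_card_iff_char_two).mpr (Nat.even_iff.mp he)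
    haveI : CharP F 2 := by rw [← h2]; exact ringChar.charP F
    refine ⟨1, one_ne_zero, ?_⟩
    rw [one_pow, CharTwo.neg_eq]
  · have h1 := hodd ho
    have hq2 : 2 ≤ Fintype.card F := Fintype.one_lt_card
    have hq3 : 3 ≤ Fintype.card F := by
      rcases Nat.lt_or_ge (Fintype.card F) 3 with h | h
      · interval_cases h' : Fintype.card F <;> simp_all [Nat.odd_iff]
      · exact h
    set q := Fintype.card F with hq
    have hdm := Nat.div_add_mod q (2 * k)
    set t := q / (2 * k) with ht
    have hqt : q - 1 = 2 * k * t := by omega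
    have htpos : 1 ≤ t := by nlinarith
    obtain ⟨g, hg⟩ := IsCyclic.exists_generator (α := Fˣ)
    have hog : orderOf g = q - 1 := by
      rw [orderOf_eq_card_of_forall_mem_zpowers hg, Nat.card_units, Nat.card_eq_fintype_card]
    have hgpow : g ^ (q - 1) = 1 := by
      rw [← Fintype.card_units (α := F)]; exact pow_card_eq_one
    have hne : g ^ (t * k) ≠ 1 := by
      intro h
      have hdvd : q - 1 ∣ t * k := by rw [← hog]; exact orderOf_dvd_of_pow_eq_one h
      have h0 : 0 < t * k := Nat.mul_pos htpos (by omega)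
      have := Nat.le_of_dvd h0 hdvd
      rw [hqt] at this
      nlinarith
    have hsq : ((g ^ (t * k) : Fˣ) : F) * ((g ^ (t * k) : Fˣ) : F) = 1 := by
      rw [← Units.val_mul, ← pow_add, ← Units.val_one (α := F)]
      congr 1
      rw [show t * k + t * k = q - 1 by rw [hqt]; ring, hgpow]
    have hvne : ((g ^ (t * k) : Fˣ) : F) ≠ 1 := by
      intro h
      exact hne (Units.ext (by rw [h, Units.val_one]))
    have hneg : ((g ^ (t * k) : Fˣ) : F) = -1 := by
      rcases mul_self_eq_one_iff.mp hsq with h | h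
      · exact absurd h hvne
      · exact h
    refine ⟨((g ^ t : Fˣ) : F), Units.ne_zero _, ?_⟩
    rw [← Units.val_pow_eq_pow_val, ← pow_mul, hneg]

lemma gp_chi_neg_one (χ : MulChar F ℂ) (hord : orderOf χ = k) (hk : 2 ≤ k)
    (heven : Even (Fintype.card F) → Fintype.card F % k = 1)
    (hodd : Odd (Fintype.card F) → Fintype.card F % (2 * k) = 1) :
    χ (-1) = 1 := by
  obtain ⟨y, hy0, hyk⟩ := gp_neg_one_pow hk heven hodd
  have hne : (-1 : F) ≠ 0 := by
    intro h
    rw [neg_eq_zero] at h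
    exact one_ne_zero h
  exact (gp_val_one_iff χ hord hk hne).mpr ⟨y, hy0, hyk⟩

end Chars

section Chars
variable {F : Type*} [Field F] [Fintype F] [DecidableEq F] {k : ℕ}


lemma gp_indicator (χ : MulChar F ℂ) (hord : orderOf χ = k) (hk : 2 ≤ k) (x : F) :
    ∑ j ∈ range k, (χ ^ j) x
      = if ∃ c : F, c ≠ 0 ∧ c ^ k = x then (k : ℂ) else 0 := by
  by_cases hx : x = 0
  · subst hx
    rw [if_neg]
    · exact Finset.sum_eq_zero fun j _ => MulChar.map_zero _
    · rintro ⟨c, hc, hck⟩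
      exact hc ((pow_eq_zero_iff (show k ≠ 0 by omega)).mp hck)
  · have hterm : ∀ j ∈ range k, (χ ^ j) x = χ x ^ j := by
      intro j _
      rcases Nat.eq_zero_or_pos j with rfl | hj
      · rw [pow_zero, pow_zero, MulChar.one_apply (Ne.isUnit hx)]
      · exact MulChar.pow_apply' χ (by omega) x
    rw [Finset.sum_congr rfl hterm]
    have hxk : χ x ^ k = 1 := by
      rw [← MulChar.pow_apply' χ (by omega) x, gp_pow_k χ hord,
        MulChar.one_apply (Ne.isUnit hx)]
    by_cases h1 : χ x = 1
    · rw [if_pos ((gp_val_one_iff χ hord hk hx).mp h1)]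
      simp [h1]
    · rw [if_neg (fun hc => h1 ((gp_val_one_iff χ hord hk hx).mpr hc))]
      have := geom_sum_eq h1 k
      rw [this, hxk, sub_self, zero_div]

lemma gp_T (χ : MulChar F ℂ) (hord : orderOf χ = k) (hk : 2 ≤ k)
    (hneg : χ (-1) = 1) (r s t : ℕ) :
    ∑ x : F, ∑ y : F, (χ ^ r) (x - y) * ((χ ^ s) y * (χ ^ t) x)
      = if k ∣ r + s + t then
          ((Fintype.card F : ℂ) - 1) * jacobiSum (χ ^ t) (χ ^ r) else 0 := by
  have hpowneg : ∀ n : ℕ, (χ ^ n) (-1) = 1 := by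
    intro n
    rcases Nat.eq_zero_or_pos n with rfl | hn
    · rw [pow_zero, MulChar.one_apply (Ne.isUnit (by simp : (-1 : F) ≠ 0))]
    · rw [MulChar.pow_apply' χ (by omega), hneg, one_pow]
  rw [Finset.sum_comm]
  have hinner : ∀ y : F, ∑ x : F, (χ ^ r) (x - y) * ((χ ^ s) y * (χ ^ t) x)
      = (χ ^ (r + s + t)) y * jacobiSum (χ ^ t) (χ ^ r) := by
    intro y
    by_cases hy : y = 0
    · subst hy
      simp [MulChar.map_zero]
    · rw [← Fintype.sum_equiv (Equiv.mulRight₀ y hy)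
        (fun u => (χ ^ r) (u * y - y) * ((χ ^ s) y * (χ ^ t) (u * y)))
        (fun x => (χ ^ r) (x - y) * ((χ ^ s) y * (χ ^ t) x)) (fun u => rfl)]
      have hpt : ∀ u : F, (χ ^ r) (u * y - y) * ((χ ^ s) y * (χ ^ t) (u * y))
          = ((χ ^ t) u * (χ ^ r) (1 - u)) * (χ ^ (r + s + t)) y := by
        intro u
        have h1 : u * y - y = (u - 1) * y := by ring
        have h2 : (χ ^ r) (u - 1) = (χ ^ r) (1 - u) := by
          rw [show u - 1 = -1 * (1 - u) by ring, map_mul, hpowneg r, one_mul]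
        rw [h1, map_mul, map_mul, h2]
        rw [add_assoc r s t, pow_add, pow_add,
          MulChar.mul_apply, MulChar.mul_apply]
        ring
      rw [Finset.sum_congr rfl (fun u _ => hpt u), ← Finset.sum_mul]
      rw [show ∑ u : F, (χ ^ t) u * (χ ^ r) (1 - u) = jacobiSum (χ ^ t) (χ ^ r) from rfl]
      ring
  rw [Finset.sum_congr rfl (fun y _ => hinner y), ← Finset.sum_mul]
  by_cases hd : k ∣ r + s + t
  · rw [if_pos hd]
    have h1 : χ ^ (r + s + t) = 1 := by
      rw [← orderOf_dvd_iff_pow_eq_one, hord]; exact hd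
    rw [h1]
    congr 1
    rw [MulChar.sum_one_eq_card_units, Fintype.card_units,
      Nat.cast_sub Fintype.card_pos, Nat.cast_one]
  · rw [if_neg hd]
    have h1 : χ ^ (r + s + t) ≠ 1 := by
      rw [Ne, ← orderOf_dvd_iff_pow_eq_one, hord]; exact hd
    rw [MulChar.sum_eq_zero_of_ne_one h1, zero_mul]
end Chars



lemma gp_unique_s {M : Type*} [AddCommMonoid M] {k : ℕ} (hk : 0 < k) (r t : ℕ) (c : M) :
    ∑ s ∈ range k, (if k ∣ r + s + t then c else 0) = c := by
  set a := (r + t) % k with ha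
  set d := (r + t) / k with hd
  have hdm : k * d + a = r + t := Nat.div_add_mod (r + t) k
  have hak : a < k := Nat.mod_lt _ hk
  set s₀ := (k - a) % k with hs₀
  have hs₀k : s₀ < k := Nat.mod_lt _ hk
  have hdvd : k ∣ r + s₀ + t := by
    rcases Nat.eq_zero_or_pos a with h0 | h0
    · refine ⟨d, ?_⟩
      have h1 : s₀ = 0 := by rw [hs₀, h0, Nat.sub_zero, Nat.mod_self]
      generalize k * d = K at hdm ⊢
      omega
    · refine ⟨d + 1, ?_⟩
      have h1 : s₀ = k - a := by rw [hs₀, Nat.mod_eq_of_lt (by omega)]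
      rw [show k * (d + 1) = k * d + k by ring]
      generalize k * d = K at hdm ⊢
      omega
  have huniq : ∀ b, b < k → k ∣ r + b + t → b = s₀ := by
    intro b hb hbd
    have h1 : (b + (r + t)) % k = 0 := by
      rw [show b + (r + t) = r + b + t by ring]
      exact Nat.dvd_iff_mod_eq_zero.mp hbd
    have h2 : (s₀ + (r + t)) % k = 0 := by
      rw [show s₀ + (r + t) = r + s₀ + t by ring]
      exact Nat.dvd_iff_mod_eq_zero.mp hdvd
    have h3 : b % k = s₀ % k := Nat.ModEq.add_right_cancel' (r + t) (h1.trans h2.symm)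
    rwa [Nat.mod_eq_of_lt hb, Nat.mod_eq_of_lt hs₀k] at h3
  rw [Finset.sum_eq_single_of_mem s₀ (mem_range.mpr hs₀k)
    (fun b hb hne => if_neg fun hd' => hne (huniq b (mem_range.mp hb) hd'))]
  exact if_pos hdvd

lemma gp_k_dvd_iff {k r t : ℕ} (hr1 : 1 ≤ r) (hr2 : r < k) (ht1 : 1 ≤ t) (ht2 : t < k) :
    k ∣ r + t ↔ r + t = k := by
  constructor
  · rintro ⟨m, hm⟩
    have hm3 : m = 0 ∨ m = 1 ∨ 2 ≤ m := by omega
    rcases hm3 with rfl | rfl | h2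
    · omega
    · omega
    · have hle : k * 2 ≤ k * m := Nat.mul_le_mul_left k h2
      generalize k * m = K at hm hle
      omega
  · intro h; exact ⟨1, by omega⟩

lemma gp_sum3_comm {M : Type*} [AddCommMonoid M] {α : Type*} [Fintype α]
    (g : α → α → α → M) :
    ∑ c : α, ∑ a : α, ∑ b : α, g a b c = ∑ a : α, ∑ b : α, ∑ c : α, g a b c := by
  rw [Finset.sum_comm]
  exact Finset.sum_congr rfl fun a _ => Finset.sum_comm

lemma gp_swap5 {M : Type*} [AddCommMonoid M] {α β : Type*} [Fintype α] (A : Finset β)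
    (X : β → β → β → α → α → M) :
    ∑ x : α, ∑ y : α, ∑ r ∈ A, ∑ s ∈ A, ∑ t ∈ A, X r s t x y
      = ∑ r ∈ A, ∑ s ∈ A, ∑ t ∈ A, ∑ x : α, ∑ y : α, X r s t x y := by
  rw [show (∑ x : α, ∑ y : α, ∑ r ∈ A, ∑ s ∈ A, ∑ t ∈ A, X r s t x y)
      = ∑ x : α, ∑ r ∈ A, ∑ y : α, ∑ s ∈ A, ∑ t ∈ A, X r s t x y from
    Finset.sum_congr rfl fun x _ => Finset.sum_comm]
  rw [Finset.sum_comm]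
  refine Finset.sum_congr rfl fun r _ => ?_
  rw [show (∑ x : α, ∑ y : α, ∑ s ∈ A, ∑ t ∈ A, X r s t x y)
      = ∑ x : α, ∑ s ∈ A, ∑ y : α, ∑ t ∈ A, X r s t x y from
    Finset.sum_congr rfl fun x _ => Finset.sum_comm]
  rw [Finset.sum_comm]
  refine Finset.sum_congr rfl fun s _ => ?_
  rw [show (∑ x : α, ∑ y : α, ∑ t ∈ A, X r s t x y)
      = ∑ x : α, ∑ t ∈ A, ∑ y : α, X r s t x y from
    Finset.sum_congr rfl fun x _ => Finset.sum_comm]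
  rw [Finset.sum_comm]

lemma gp_sum3_rev {M : Type*} [AddCommMonoid M] {β : Type*} (A : Finset β)
    (X : β → β → β → M) :
    ∑ t ∈ A, ∑ s ∈ A, ∑ r ∈ A, X r s t = ∑ r ∈ A, ∑ s ∈ A, ∑ t ∈ A, X r s t := by
  rw [show (∑ t ∈ A, ∑ s ∈ A, ∑ r ∈ A, X r s t)
      = ∑ t ∈ A, ∑ r ∈ A, ∑ s ∈ A, X r s t from
    Finset.sum_congr rfl fun t _ => Finset.sum_comm, Finset.sum_comm]
  exact Finset.sum_congr rfl fun r _ => Finset.sum_comm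

section Main

variable {F : Type*} [Field F] [Fintype F] [DecidableEq F] {k : ℕ}

lemma gp_pow_neg_one (χ : MulChar F ℂ) (hneg : χ (-1) = 1) (n : ℕ) :
    (χ ^ n) (-1 : F) = 1 := by
  rcases Nat.eq_zero_or_pos n with rfl | hn
  · rw [pow_zero, MulChar.one_apply (Ne.isUnit (show (-1 : F) ≠ 0 by simp))]
  · rw [MulChar.pow_apply' χ (by omega), hneg, one_pow]

end Main

theorem genPaley_triangle_count {F : Type*} [Field F] [Fintype F]
    (k : ℕ) (hk : 2 ≤ k)
    (heven : Even (Fintype.card F) → Fintype.card F % k = 1)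
    (hodd : Odd (Fintype.card F) → Fintype.card F % (2 * k) = 1)
    (G : SimpleGraph F)
    (hG : ∀ a b : F, G.Adj a b ↔ a ≠ b ∧ ∃ c : F, c ≠ 0 ∧ c ^ k = a - b)
    (χ : MulChar F ℂ) (hord : orderOf χ = k) :
    ((G.cliqueSet 3).ncard : ℂ)
      = (Fintype.card F : ℂ) * ((Fintype.card F : ℂ) - 1) / (6 * (k : ℂ) ^ 3) *
          ((∑ s ∈ Finset.Icc 1 (k - 1),
              ∑ t ∈ (Finset.Icc 1 (k - 1)).filter (fun t => ¬ k ∣ s + t),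
                jacobiSum (χ ^ s) (χ ^ t))
            + (Fintype.card F : ℂ) - 3 * (k : ℂ) + 1) := by
  classical
  have hneg : χ (-1) = 1 := gp_chi_neg_one χ hord hk heven hodd
  have hS : ∀ a b : F, G.Adj a b ↔ ∃ c : F, c ≠ 0 ∧ c ^ k = a - b := by
    intro a b
    rw [hG]
    constructor
    · rintro ⟨-, h⟩; exact h
    · rintro ⟨c, hc, hck⟩
      refine ⟨fun hab => ?_, c, hc, hck⟩
      rw [hab, sub_self] at hck
      exact hc ((pow_eq_zero_iff (show k ≠ 0 by omega)).mp hck)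
  have hfval : ∀ x : F, (∑ j ∈ range k, (χ ^ j) x)
      = if ∃ c : F, c ≠ 0 ∧ c ^ k = x then (k : ℂ) else 0 := gp_indicator χ hord hk
  -- Step 1 : character sum counts adjacency triples
  have step1 : (∑ c : F, ∑ a : F, ∑ b : F,
        (∑ j ∈ range k, (χ ^ j) (a - b)) *
          ((∑ j ∈ range k, (χ ^ j) (b - c)) * (∑ j ∈ range k, (χ ^ j) (a - c))))
      = (k : ℂ) ^ 3 * ((univ.filter fun p : F × F × F =>
          G.Adj p.1 p.2.1 ∧ G.Adj p.2.1 p.2.2 ∧ G.Adj p.1 p.2.2).card : ℂ) := by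
    have hpt : ∀ a b c : F,
        (∑ j ∈ range k, (χ ^ j) (a - b)) *
          ((∑ j ∈ range k, (χ ^ j) (b - c)) * (∑ j ∈ range k, (χ ^ j) (a - c)))
        = if G.Adj a b ∧ G.Adj b c ∧ G.Adj a c then (k : ℂ) ^ 3 else 0 := by
      intro a b c
      rw [hfval, hfval, hfval]
      have e1 : (∃ c0 : F, c0 ≠ 0 ∧ c0 ^ k = a - b) ↔ G.Adj a b := (hS a b).symm
      have e2 : (∃ c0 : F, c0 ≠ 0 ∧ c0 ^ k = b - c) ↔ G.Adj b c := (hS b c).symm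
      have e3 : (∃ c0 : F, c0 ≠ 0 ∧ c0 ^ k = a - c) ↔ G.Adj a c := (hS a c).symm
      simp only [e1, e2, e3]
      split_ifs <;> first | ring1 | tauto
    rw [Finset.sum_congr rfl fun c _ => Finset.sum_congr rfl fun a _ =>
      Finset.sum_congr rfl fun b _ => hpt a b c]
    rw [gp_sum3_comm (fun a b c => if G.Adj a b ∧ G.Adj b c ∧ G.Adj a c then (k : ℂ) ^ 3 else 0)]
    have hpp : (∑ p : F × F × F, if G.Adj p.1 p.2.1 ∧ G.Adj p.2.1 p.2.2 ∧ G.Adj p.1 p.2.2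
          then (k : ℂ) ^ 3 else 0)
        = ∑ a : F, ∑ b : F, ∑ c : F,
            if G.Adj a b ∧ G.Adj b c ∧ G.Adj a c then (k : ℂ) ^ 3 else 0 := by
      simp only [Fintype.sum_prod_type]
    rw [← hpp, Finset.sum_ite, Finset.sum_const, Finset.sum_const_zero, add_zero,
      nsmul_eq_mul]
    ring
  -- Step 2 : substitution
  have step2 : (∑ c : F, ∑ a : F, ∑ b : F,
        (∑ j ∈ range k, (χ ^ j) (a - b)) *
          ((∑ j ∈ range k, (χ ^ j) (b - c)) * (∑ j ∈ range k, (χ ^ j) (a - c))))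
      = (Fintype.card F : ℂ) * ∑ x : F, ∑ y : F,
          (∑ j ∈ range k, (χ ^ j) (x - y)) *
            ((∑ j ∈ range k, (χ ^ j) y) * (∑ j ∈ range k, (χ ^ j) x)) := by
    have hc : ∀ cc : F, (∑ a : F, ∑ b : F,
        (∑ j ∈ range k, (χ ^ j) (a - b)) *
          ((∑ j ∈ range k, (χ ^ j) (b - cc)) * (∑ j ∈ range k, (χ ^ j) (a - cc))))
        = ∑ x : F, ∑ y : F,
            (∑ j ∈ range k, (χ ^ j) (x - y)) *
              ((∑ j ∈ range k, (χ ^ j) y) * (∑ j ∈ range k, (χ ^ j) x)) := by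
      intro cc
      have h1 : ∀ x : F, (∑ b : F,
          (∑ j ∈ range k, (χ ^ j) ((x + cc) - b)) *
            ((∑ j ∈ range k, (χ ^ j) (b - cc)) * (∑ j ∈ range k, (χ ^ j) ((x + cc) - cc))))
          = ∑ y : F, (∑ j ∈ range k, (χ ^ j) (x - y)) *
              ((∑ j ∈ range k, (χ ^ j) y) * (∑ j ∈ range k, (χ ^ j) x)) := by
        intro x
        refine (Fintype.sum_equiv (Equiv.addRight cc)
          (fun y => (∑ j ∈ range k, (χ ^ j) (x - y)) *
            ((∑ j ∈ range k, (χ ^ j) y) * (∑ j ∈ range k, (χ ^ j) x)))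
          (fun b => (∑ j ∈ range k, (χ ^ j) ((x + cc) - b)) *
            ((∑ j ∈ range k, (χ ^ j) (b - cc)) * (∑ j ∈ range k, (χ ^ j) ((x + cc) - cc))))
          fun y => ?_).symm
        simp only [Equiv.coe_addRight]
        rw [show (x + cc) - (y + cc) = x - y by ring, show (y + cc) - cc = y by ring,
          show (x + cc) - cc = x by ring]
      refine (Fintype.sum_equiv (Equiv.addRight cc)
        (fun x => ∑ y : F, (∑ j ∈ range k, (χ ^ j) (x - y)) *
            ((∑ j ∈ range k, (χ ^ j) y) * (∑ j ∈ range k, (χ ^ j) x)))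
        (fun a => ∑ b : F, (∑ j ∈ range k, (χ ^ j) (a - b)) *
            ((∑ j ∈ range k, (χ ^ j) (b - cc)) * (∑ j ∈ range k, (χ ^ j) (a - cc))))
        fun x => ?_).symm
      simp only [Equiv.coe_addRight]
      exact (h1 x).symm
    rw [Finset.sum_congr rfl fun cc _ => hc cc, Finset.sum_const, Finset.card_univ,
      nsmul_eq_mul]
  -- Step 3 : expand and swap
  have step3 : (∑ x : F, ∑ y : F,
        (∑ j ∈ range k, (χ ^ j) (x - y)) *
          ((∑ j ∈ range k, (χ ^ j) y) * (∑ j ∈ range k, (χ ^ j) x)))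
      = ∑ r ∈ range k, ∑ s ∈ range k, ∑ t ∈ range k, ∑ x : F, ∑ y : F,
          (χ ^ r) (x - y) * ((χ ^ s) y * (χ ^ t) x) := by
    have hexp : ∀ x y : F, (∑ j ∈ range k, (χ ^ j) (x - y)) *
          ((∑ j ∈ range k, (χ ^ j) y) * (∑ j ∈ range k, (χ ^ j) x))
        = ∑ r ∈ range k, ∑ s ∈ range k, ∑ t ∈ range k,
            (χ ^ r) (x - y) * ((χ ^ s) y * (χ ^ t) x) := by
      intro x y
      simp only [Finset.sum_mul, Finset.mul_sum]
      exact gp_sum3_rev (range k)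
        (fun r s t => (χ ^ r) (x - y) * ((χ ^ s) y * (χ ^ t) x))
    rw [Finset.sum_congr rfl fun x _ => Finset.sum_congr rfl fun y _ => hexp x y]
    exact gp_swap5 (range k) (fun r s t x y => (χ ^ r) (x - y) * ((χ ^ s) y * (χ ^ t) x))
  -- Step 4 : evaluate inner double sums
  have step4 : (∑ r ∈ range k, ∑ s ∈ range k, ∑ t ∈ range k, ∑ x : F, ∑ y : F,
        (χ ^ r) (x - y) * ((χ ^ s) y * (χ ^ t) x))
      = ∑ r ∈ range k, ∑ s ∈ range k, ∑ t ∈ range k,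
          if k ∣ r + s + t then ((Fintype.card F : ℂ) - 1) * jacobiSum (χ ^ t) (χ ^ r)
          else 0 :=
    Finset.sum_congr rfl fun r _ => Finset.sum_congr rfl fun s _ =>
      Finset.sum_congr rfl fun t _ => gp_T χ hord hk hneg r s t
  -- Step 5 : collapse the s-sum
  have step5 : (∑ r ∈ range k, ∑ s ∈ range k, ∑ t ∈ range k,
        if k ∣ r + s + t then ((Fintype.card F : ℂ) - 1) * jacobiSum (χ ^ t) (χ ^ r)
        else 0)
      = ∑ r ∈ range k, ∑ t ∈ range k,
          ((Fintype.card F : ℂ) - 1) * jacobiSum (χ ^ t) (χ ^ r) := by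
    refine Finset.sum_congr rfl fun r _ => ?_
    rw [Finset.sum_comm]
    exact Finset.sum_congr rfl fun t _ => gp_unique_s (show 0 < k by omega) r t _
  -- cast helpers
  have hcast : ((k - 1 : ℕ) : ℂ) = (k : ℂ) - 1 := by
    have := Nat.cast_sub (R := ℂ) (show 1 ≤ k by omega)
    simpa using this
  have hnontriv : ∀ r ∈ Icc 1 (k - 1), (χ : MulChar F ℂ) ^ r ≠ 1 := by
    intro r hr h
    rw [mem_Icc] at hr
    have hdvd : k ∣ r := hord ▸ orderOf_dvd_iff_pow_eq_one.mpr h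
    have := Nat.le_of_dvd (by omega) hdvd
    omega
  have hsplit : range k = insert 0 (Icc 1 (k - 1)) := by
    ext n
    simp only [mem_range, mem_insert, mem_Icc]
    omega
  have h0I : (0 : ℕ) ∉ Icc 1 (k - 1) := by simp
  have hcardI : (Icc 1 (k - 1)).card = k - 1 := by
    rw [Nat.card_Icc]
    omega
  have hJinv : ∀ r ∈ Icc 1 (k - 1), jacobiSum ((χ : MulChar F ℂ) ^ (k - r)) (χ ^ r) = -1 := by
    intro r hr
    have hr' := mem_Icc.mp hr
    have hinv : (χ : MulChar F ℂ) ^ (k - r) = (χ ^ r)⁻¹ :=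
      eq_inv_of_mul_eq_one_left
        (by rw [← pow_add, show k - r + r = k by omega, gp_pow_k χ hord])
    rw [hinv, jacobiSum_comm, jacobiSum_nontrivial_inv (hnontriv r hr),
      gp_pow_neg_one χ hneg r]
  -- Step 7 : the double Jacobi sum
  have step7 : (∑ r ∈ range k, ∑ t ∈ range k, jacobiSum ((χ : MulChar F ℂ) ^ t) (χ ^ r))
      = (∑ s ∈ Finset.Icc 1 (k - 1),
          ∑ t ∈ (Finset.Icc 1 (k - 1)).filter (fun t => ¬ k ∣ s + t),
            jacobiSum (χ ^ s) (χ ^ t))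
        + ((Fintype.card F : ℂ) - 2) - 3 * ((k : ℂ) - 1) := by
    rw [hsplit, Finset.sum_insert h0I]
    have hA : (∑ t ∈ insert 0 (Icc 1 (k - 1)), jacobiSum ((χ : MulChar F ℂ) ^ t) (χ ^ 0))
        = ((Fintype.card F : ℂ) - 2) - ((k : ℂ) - 1) := by
      rw [Finset.sum_insert h0I, pow_zero, jacobiSum_one_one]
      have h2 : ∀ t ∈ Icc 1 (k - 1), jacobiSum ((χ : MulChar F ℂ) ^ t) 1 = -1 :=
        fun t ht => by rw [jacobiSum_comm, jacobiSum_one_nontrivial (hnontriv t ht)]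
      rw [Finset.sum_congr rfl h2, Finset.sum_const, hcardI, nsmul_eq_mul, hcast]
      ring
    have hB : ∀ r ∈ Icc 1 (k - 1),
        (∑ t ∈ insert 0 (Icc 1 (k - 1)), jacobiSum ((χ : MulChar F ℂ) ^ t) (χ ^ r))
          = -2 + ∑ t ∈ (Icc 1 (k - 1)).filter (fun t => ¬ k ∣ r + t),
              jacobiSum ((χ : MulChar F ℂ) ^ t) (χ ^ r) := by
      intro r hr
      have hr' := mem_Icc.mp hr
      rw [Finset.sum_insert h0I, pow_zero, jacobiSum_one_nontrivial (hnontriv r hr)]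
      have hI : (∑ t ∈ Icc 1 (k - 1), jacobiSum ((χ : MulChar F ℂ) ^ t) (χ ^ r))
          = (∑ t ∈ (Icc 1 (k - 1)).filter (fun t => k ∣ r + t),
              jacobiSum ((χ : MulChar F ℂ) ^ t) (χ ^ r))
            + ∑ t ∈ (Icc 1 (k - 1)).filter (fun t => ¬ k ∣ r + t),
                jacobiSum ((χ : MulChar F ℂ) ^ t) (χ ^ r) :=
        (Finset.sum_filter_add_sum_filter_not _ _ _).symm
      have hfil : (Icc 1 (k - 1)).filter (fun t => k ∣ r + t) = {k - r} := by
        ext t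
        simp only [mem_filter, mem_Icc, mem_singleton]
        constructor
        · rintro ⟨⟨ht1, ht2⟩, hd⟩
          have := (gp_k_dvd_iff hr'.1 (by omega) ht1 (by omega)).mp hd
          omega
        · rintro rfl
          exact ⟨⟨by omega, by omega⟩, ⟨1, by omega⟩⟩
      rw [hI, hfil, Finset.sum_singleton, hJinv r hr]
      ring
    rw [Finset.sum_congr rfl hB, Finset.sum_add_distrib, Finset.sum_const, hcardI,
      nsmul_eq_mul, hcast, hA]
    have hR : (∑ r ∈ Icc 1 (k - 1), ∑ t ∈ (Icc 1 (k - 1)).filter (fun t => ¬ k ∣ r + t),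
          jacobiSum ((χ : MulChar F ℂ) ^ t) (χ ^ r))
        = ∑ s ∈ Finset.Icc 1 (k - 1),
            ∑ t ∈ (Finset.Icc 1 (k - 1)).filter (fun t => ¬ k ∣ s + t),
              jacobiSum (χ ^ s) (χ ^ t) := by
      simp only [Finset.sum_filter]
      rw [Finset.sum_comm]
      exact Finset.sum_congr rfl fun s _ => Finset.sum_congr rfl fun t _ => by
        rw [Nat.add_comm t s]
    rw [hR]
    ring
  -- assemble the chain
  have chain : (k : ℂ) ^ 3 * ((univ.filter fun p : F × F × F =>
        G.Adj p.1 p.2.1 ∧ G.Adj p.2.1 p.2.2 ∧ G.Adj p.1 p.2.2).card : ℂ)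
      = (Fintype.card F : ℂ) * (((Fintype.card F : ℂ) - 1) *
          ((∑ s ∈ Finset.Icc 1 (k - 1),
              ∑ t ∈ (Finset.Icc 1 (k - 1)).filter (fun t => ¬ k ∣ s + t),
                jacobiSum (χ ^ s) (χ ^ t))
            + ((Fintype.card F : ℂ) - 2) - 3 * ((k : ℂ) - 1))) := by
    rw [← step1, step2, step3, step4, step5]
    simp only [← Finset.mul_sum]
    rw [step7]
  -- triangle count
  have hcount := gp_triple_count G
  have hnc : (G.cliqueSet 3).ncard = (G.cliqueFinset 3).card := by
    rw [← SimpleGraph.coe_cliqueFinset, Set.ncard_coe_finset]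
  have hTc : ((G.cliqueSet 3).ncard : ℂ) * 6 = ((univ.filter fun p : F × F × F =>
      G.Adj p.1 p.2.1 ∧ G.Adj p.2.1 p.2.2 ∧ G.Adj p.1 p.2.2).card : ℂ) := by
    rw [hnc, hcount]
    push_cast
    ring
  have h6k : (6 : ℂ) * (k : ℂ) ^ 3 ≠ 0 :=
    mul_ne_zero (by norm_num) (pow_ne_zero _ (Nat.cast_ne_zero.mpr (by omega)))
  rw [div_mul_eq_mul_div, eq_div_iff h6k]
  linear_combination (k : ℂ) ^ 3 * hTc + chain
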